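/- The Automath book B_Δ obtained by translating a λD-environment Δ is clean: no assumption line of B_Δ is a dead-end. -/

import Mathlib

/-- Content of an Automath line: `---`, `PN`, or a term (abstractly a natural number). -/
inductive Content where
  | dash : Content
  | pn : Content
  | term : ℕ → Content
deriving DecidableEq

/-- An Automath line: indicator (`none` = ε), identifier, content, category. -/
structure Line where
  indicator : Option ℕ
  identifier : ℕ
  content : Content
  category : ℕ
deriving DecidableEq

abbrev Book := List Line

def Line.isAssum (l : Line) : Bool := l.content == Content.dash
def Line.isPrim (l : Line) : Bool := l.content == Content.pn
def Line.isDefin (l : Line) : Bool := match l.content with | .term _ => true | _ => false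

/-- Coherence: identifiers pairwise distinct, and each non-ε indicator is the
identifier of an earlier assumption line. -/
def Coherent (B : Book) : Prop :=
  (B.map Line.identifier).Nodup ∧
  ∀ m : ℕ, ∀ L : Line, B[m]? = some L → ∀ y : ℕ, L.indicator = some y →
    ∃ l : ℕ, l < m ∧ ∃ L' : Line, B[l]? = some L' ∧ L'.identifier = y ∧ L'.isAssum

/-- Index of the assumption line introducing identifier `y`. -/
def introIdx (B : Book) (y : ℕ) : Option ℕ :=
  B.findIdx? (fun l => l.identifier == y && l.isAssum)

/-- Fuel-based computation of the subject-list γ of the line at index `i`. -/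
def gammaAux (B : Book) : ℕ → ℕ → List ℕ
  | 0, i =>
    match B[i]? with
    | none => []
    | some l => [l.identifier]
  | fuel+1, i =>
    match B[i]? with
    | none => []
    | some l =>
      match l.indicator with
      | none => [l.identifier]
      | some y =>
        match introIdx B y with
        | none => [l.identifier]
        | some j => gammaAux B fuel j ++ [l.identifier]

/-- Subject-list γ_z of variable `z` (introduced by an assumption line). γ_ε = []. -/
def gammaOf (B : Book) (z : ℕ) : List ℕ :=
  match introIdx B z with
  | none => []
  | some i => gammaAux B i i

/-- Fuel-based computation of the typing-context Γ of the line at index `i`. -/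
def ctxAux (B : Book) : ℕ → ℕ → List (ℕ × ℕ)
  | 0, i =>
    match B[i]? with
    | none => []
    | some l => [(l.identifier, l.category)]
  | fuel+1, i =>
    match B[i]? with
    | none => []
    | some l =>
      match l.indicator with
      | none => [(l.identifier, l.category)]
      | some y =>
        match introIdx B y with
        | none => [(l.identifier, l.category)]
        | some j => ctxAux B fuel j ++ [(l.identifier, l.category)]

/-- Typing-context Γ_z of variable `z`. Γ_ε = ∅. -/
def ctxOf (B : Book) (z : ℕ) : List (ℕ × ℕ) :=
  match introIdx B z with
  | none => []
  | some i => ctxAux B i i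

/-- Subject-list of an indicator (γ_ε = [] for the empty indicator). -/
def gammaInd (B : Book) : Option ℕ → List ℕ
  | none => []
  | some y => gammaOf B y

/-- Typing-context of an indicator. -/
def ctxInd (B : Book) : Option ℕ → List (ℕ × ℕ)
  | none => []
  | some y => ctxOf B y

/-- y ≺ z : some line of `B` has indicator `y` (≠ ε) and identifier `z`. -/
def Prec (B : Book) (y z : ℕ) : Prop :=
  ∃ L ∈ B, L.indicator = some y ∧ L.identifier = z

/-- The line at index `i` is a dead-end assumption line. -/
def DeadEnd (B : Book) (i : ℕ) : Prop :=
  ∃ L : Line, B[i]? = some L ∧ L.isAssum ∧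
    ∀ j : ℕ, i < j → ∀ L' : Line, B[j]? = some L' → L'.indicator ≠ some L.identifier

/-- One removal step: delete a single dead-end assumption line. -/
def Step (B B' : Book) : Prop := ∃ i : ℕ, DeadEnd B i ∧ B' = B.eraseIdx i

/-- A clean book: coherent with no dead-end assumption lines. -/
def IsClean (B : Book) : Prop := Coherent B ∧ ∀ i : ℕ, ¬ DeadEnd B i

/-- An entry of the λD-environment Δ_B. -/
structure Entry where
  ctx : List (ℕ × ℕ)
  const : ℕ
  args : List ℕ
  content : Content
  category : ℕ

def Fresh (B : Book) (x : ℕ) : Prop := ∀ L ∈ B, L.identifier ≠ x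

def IndOk (B : Book) : Option ℕ → Prop
  | none => True
  | some z => ∃ L ∈ B, L.identifier = z ∧ L.isAssum

/-- Well-formed (ok) books with their translation Δ_B, relative to abstract
typing judgements `J Δ Γ M A` (Δ; Γ ⊢ M : A) and `S Δ Γ A` (Δ; Γ ⊢ A : s). -/
inductive Ok (J : List Entry → List (ℕ × ℕ) → ℕ → ℕ → Prop)
    (S : List Entry → List (ℕ × ℕ) → ℕ → Prop) : Book → List Entry → Prop
  | nil : Ok J S [] []
  | assum {B : Book} {Δ : List Entry} {ind : Option ℕ} {x A : ℕ} :
      Ok J S B Δ → Fresh B x → IndOk B ind → S Δ (ctxInd B ind) A →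
      Ok J S (B ++ [⟨ind, x, Content.dash, A⟩]) Δ
  | defin {B : Book} {Δ : List Entry} {ind : Option ℕ} {c M A : ℕ} :
      Ok J S B Δ → Fresh B c → IndOk B ind → J Δ (ctxInd B ind) M A →
      Ok J S (B ++ [⟨ind, c, Content.term M, A⟩])
        (Δ ++ [⟨ctxInd B ind, c, gammaInd B ind, Content.term M, A⟩])
  | prim {B : Book} {Δ : List Entry} {ind : Option ℕ} {c A : ℕ} :
      Ok J S B Δ → Fresh B c → IndOk B ind → S Δ (ctxInd B ind) A →
      Ok J S (B ++ [⟨ind, c, Content.pn, A⟩])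
        (Δ ++ [⟨ctxInd B ind, c, gammaInd B ind, Content.pn, A⟩])

/-- A λD-environment definition: context, constant, content (term or PN), type. -/
structure Defn where
  ctx : List (ℕ × ℕ)
  const : ℕ
  content : Content
  category : ℕ

/-- The chain of assumption lines for a context, with indicators ε, x₁, x₂, …. -/
def clusterAssums : Option ℕ → List (ℕ × ℕ) → List Line
  | _, [] => []
  | prev, (x, A) :: rest => ⟨prev, x, Content.dash, A⟩ :: clusterAssums (some x) rest

/-- The last variable of a context (the indicator of the final line). -/
def lastVar (ctx : List (ℕ × ℕ)) : Option ℕ := (ctx.map Prod.fst).getLast?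

/-- The cluster of Automath lines corresponding to one λD-definition. -/
def cluster (d : Defn) : List Line :=
  clusterAssums none d.ctx ++ [⟨lastVar d.ctx, d.const, d.content, d.category⟩]

/-- The translation of a λD-environment to an Automath book B_Δ. -/
def transEnv (Δ : List Defn) : Book := (Δ.map cluster).flatten


def Good (B : Book) : Prop :=
  ∀ i L, B[i]? = some L → L.isAssum → ∃ L', B[i+1]? = some L' ∧ L'.indicator = some L.identifier

lemma good_append {A B : Book} (hA0 : A ≠ [])
    (hAlast : ∀ L, A.getLast? = some L → ¬ L.isAssum)
    (hA : ∀ i L, A[i]? = some L → L.isAssum →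
      ∃ L', A[i+1]? = some L' ∧ L'.indicator = some L.identifier)
    (hB : Good B) : Good (A ++ B) := by
  intro i L hget hass
  rcases lt_or_ge i A.length with hi | hi
  · rw [List.getElem?_append_left hi] at hget
    have ⟨L', hL', hind⟩ := hA i L hget hass
    refine ⟨L', ?_, hind⟩
    have : i + 1 < A.length := by
      by_contra h
      rw [List.getElem?_eq_none (by omega)] at hL'
      simp at hL'
    rw [List.getElem?_append_left this]; exact hL'
  · rw [List.getElem?_append_right hi] at hget
    have ⟨L', hL', hind⟩ := hB (i - A.length) L hget hass
    refine ⟨L', ?_, hind⟩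
    rw [List.getElem?_append_right (by omega)]
    have : i + 1 - A.length = i - A.length + 1 := by omega
    rw [this]; exact hL'

lemma clusterAssums_good (l : List (ℕ × ℕ)) :
    ∀ (prev : Option ℕ) (F : Line), ¬ F.isAssum →
    (∀ x, (l.map Prod.fst).getLast? = some x → F.indicator = some x) →
    ∀ i L, (clusterAssums prev l ++ [F])[i]? = some L → L.isAssum →
      ∃ L', (clusterAssums prev l ++ [F])[i+1]? = some L' ∧
        L'.indicator = some L.identifier := by
  induction l with
  | nil =>
    intro prev F hFass hF i L hget hass
    simp only [clusterAssums, List.nil_append] at hget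
    match i, hget with
    | 0, hget =>
      simp at hget
      subst hget
      exact absurd hass (by simpa [Line.isAssum] using hFass)
  | cons p rest ih =>
    intro prev F hFass hF i L hget hass
    obtain ⟨x, A⟩ := p
    simp only [clusterAssums, List.cons_append] at hget ⊢
    match i with
    | 0 =>
      simp at hget
      subst hget
      refine ⟨(clusterAssums (some x) rest ++ [F])[0]'(by simp), by simp, ?_⟩
      match rest with
      | [] =>
        have : F.indicator = some x := hF x (by simp)
        simpa [clusterAssums, this]
      | (y, B) :: r =>
        simp [clusterAssums]
    | j + 1 =>
      simp only [List.getElem?_cons_succ] at hget ⊢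
      refine ih (some x) F hFass ?_ j L hget hass
      intro z hz
      apply hF
      match rest with
      | [] => simp at hz
      | q :: r => simpa using hz

lemma cluster_good (d : Defn) (hd : d.content ≠ Content.dash) :
    ∀ i L, (cluster d)[i]? = some L → L.isAssum →
      ∃ L', (cluster d)[i+1]? = some L' ∧ L'.indicator = some L.identifier := by
  apply clusterAssums_good
  · simp [Line.isAssum]; intro h; exact hd h
  intro x hx
  simp [lastVar, hx]

lemma transEnv_good (Δ : List Defn) (hdp : ∀ d ∈ Δ, d.content ≠ Content.dash) :
    Good (transEnv Δ) := by
  induction Δ with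
  | nil => intro i L h _; simp [transEnv] at h
  | cons d Δ ih =>
    have : transEnv (d :: Δ) = cluster d ++ transEnv Δ := by
      simp [transEnv]
    rw [this]
    refine good_append ?_ ?_ (cluster_good d (hdp d (by simp))) (ih fun e he => hdp e (by simp [he]))
    · simp [cluster]
    · intro L hL
      have : L = ⟨lastVar d.ctx, d.const, d.content, d.category⟩ := by
        rw [cluster, List.getLast?_concat] at hL
        exact (Option.some_injective _ hL).symm
      subst this
      have hd := hdp d (by simp)
      simp [Line.isAssum]
      intro h
      exact hd h

/-- the book B_Δ obtained by translating a λD-environment is clean: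
no assumption line of B_Δ is a dead-end. -/
theorem stmt13 (Δ : List Defn)
    (hfresh : ((transEnv Δ).map Line.identifier).Nodup)
    (hdp : ∀ d ∈ Δ, d.content ≠ Content.dash) :
    ∀ i : ℕ, ¬ DeadEnd (transEnv Δ) i := by
  intro i ⟨L, hget, hass, hall⟩
  obtain ⟨L', hL', hind⟩ := transEnv_good Δ hdp i L hget hass
  exact hall (i+1) (by omega) L' hL' hind
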